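/- Assume the robust control Lyapunov hypothesis holds, and fix a horizon N ≥ 1. Let x ∈ X and let u* ∈ U attain the infimum defining V N at x, i.e. ⨆_{w ∈ W} ((h(x,u*) : EReal) + V (N−1) (A x + B u* + w)) ≤ V N x. Then the value function decreases robustly along the closed loop: for every w ∈ W, (h(x,u*) : EReal) + V N (A x + B u* + w) ≤ V N x. -/

import Mathlib

/-- First display in the proof of Theorem 2: if `u*` attains the infimum
defining `V N` at `x ∈ X`, then the value function decreases robustly along
the closed loop: `h(x,u*) + V N (A x + B u* + w) ≤ V N x` for all `w ∈ W`. -/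
theorem lmpc_value_robust_decrease
    {n d : ℕ}
    (A : (Fin n → ℝ) →ₗ[ℝ] (Fin n → ℝ)) (B : (Fin d → ℝ) →ₗ[ℝ] (Fin n → ℝ))
    (W X : Set (Fin n → ℝ)) (U : Set (Fin d → ℝ))
    (hW : W.Nonempty)
    (h : (Fin n → ℝ) × (Fin d → ℝ) → ℝ)
    (hpos : ∀ x u, 0 ≤ h (x, u))
    (CS : Set (Fin n → ℝ)) (hCSX : CS ⊆ X)
    (Q : (Fin n → ℝ) → ℝ) (hQ0 : ∀ x ∈ CS, 0 ≤ Q x)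
    (Qbar : (Fin n → ℝ) → EReal)
    (hQbarIn : ∀ x ∈ CS, Qbar x = (Q x : EReal))
    (hQbarOut : ∀ x ∉ CS, Qbar x = ⊤)
    (T : ((Fin n → ℝ) → EReal) → (Fin n → ℝ) → EReal)
    (hTin : ∀ f, ∀ x ∈ X, T f x =
      ⨅ u ∈ U, ⨆ w ∈ W, ((h (x, u) : EReal) + f (A x + B u + w)))
    (hTout : ∀ f, ∀ x ∉ X, T f x = ⊤)
    (V : ℕ → (Fin n → ℝ) → EReal)
    (hV0 : V 0 = Qbar) (hVs : ∀ k, V (k + 1) = T (V k))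
    (hRCL : ∀ x ∈ CS, ∃ u ∈ U, ∀ w ∈ W,
      A x + B u + w ∈ CS ∧ h (x, u) + Q (A x + B u + w) ≤ Q x)
    (N : ℕ) (hN : 1 ≤ N)
    (x : Fin n → ℝ) (hx : x ∈ X)
    (u : Fin d → ℝ) (hu : u ∈ U)
    (hopt : (⨆ w ∈ W, ((h (x, u) : EReal) + V (N - 1) (A x + B u + w))) ≤ V N x) :
    ∀ w ∈ W, (h (x, u) : EReal) + V N (A x + B u + w) ≤ V N x := by

  -- Step 1: V (k+1) ≤ V k pointwise, by induction on k.
  have mono : ∀ k, ∀ y, V (k + 1) y ≤ V k y := by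
    intro k
    induction k with
    | zero =>
      intro y
      by_cases hyX : y ∈ X
      · rw [hVs 0, hTin (V 0) y hyX, hV0]
        by_cases hyC : y ∈ CS
        · obtain ⟨u', hu'U, hu'⟩ := hRCL y hyC
          refine le_trans (iInf₂_le u' hu'U) ?_
          rw [hQbarIn y hyC]
          refine iSup₂_le fun w hw => ?_
          obtain ⟨hin, hle⟩ := hu' w hw
          rw [hQbarIn _ hin, ← EReal.coe_add]
          exact EReal.coe_le_coe_iff.mpr hle
        · rw [hQbarOut y hyC]; exact le_top
      · rw [hV0, hQbarOut y (fun hc => hyX (hCSX hc))]; exact le_top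
    | succ k ih =>
      intro y
      by_cases hyX : y ∈ X
      · have hL : V (k + 1 + 1) y =
            ⨅ u ∈ U, ⨆ w ∈ W, ((h (y, u) : EReal) + V (k + 1) (A y + B u + w)) := by
          rw [hVs (k + 1), hTin _ y hyX]
        have hR : V (k + 1) y =
            ⨅ u ∈ U, ⨆ w ∈ W, ((h (y, u) : EReal) + V k (A y + B u + w)) := by
          rw [hVs k, hTin _ y hyX]
        rw [hL, hR]
        refine iInf₂_mono fun u' hu' => iSup₂_mono fun w hw => ?_
        exact add_le_add_right (ih _) _
      · rw [hVs (k + 1), hTout _ y hyX, hVs k, hTout _ y hyX]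
  intro w hw
  have h1 : V N (A x + B u + w) ≤ V (N - 1) (A x + B u + w) := by
    obtain ⟨m, rfl⟩ := Nat.exists_eq_add_of_le hN
    simpa [Nat.add_comm] using mono m (A x + B u + w)
  calc (h (x, u) : EReal) + V N (A x + B u + w)
      ≤ (h (x, u) : EReal) + V (N - 1) (A x + B u + w) := add_le_add_right h1 _
    _ ≤ ⨆ w ∈ W, ((h (x, u) : EReal) + V (N - 1) (A x + B u + w)) :=
        le_iSup₂ (f := fun w _ => (h (x, u) : EReal) + V (N - 1) (A x + B u + w)) w hw
    _ ≤ V N x := hopt
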